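/- arXiv:2510.01366 — 3 statements merged into one kernel-verified Lean document; each statement's English description precedes it below -/
import Mathlib

section
/- Let G be a graph, S a subset of its vertices, and K_n a complete graph on vertices {x_1,...,x_n} with n ≥ 2, disjoint from G. Let Γ be the graph with vertex set V(G) ⊔ V(K_n) and edge set E(G) ⊔ E(K_n) ⊔ {{u, x_n} : u ∈ S}. Then the minimum vertex cover number satisfies β(Γ) = β(G) + n − 1. -/
/-- `C` is a vertex cover of the simple graph `G`. -/
def IsVertexCover {α : Type*} (G : SimpleGraph α) (C : Finset α) : Prop :=
  ∀ ⦃u v : α⦄, G.Adj u v → u ∈ C ∨ v ∈ C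

/-- The minimum vertex cover number `β(G)`. -/
noncomputable def vcNum {α : Type*} (G : SimpleGraph α) : ℕ :=
  sInf {m : ℕ | ∃ C : Finset α, IsVertexCover G C ∧ C.card = m}

/-- The graph `Γ` obtained from `G` and a complete graph on `Fin n` by joining the
last vertex `x_n` of the complete graph to every vertex of `S`. -/
def attachCompleteGraph {α : Type*} (G : SimpleGraph α) (S : Set α) (n : ℕ) :
    SimpleGraph (α ⊕ Fin n) where
  Adj a b :=
    match a, b with
    | Sum.inl u, Sum.inl v => G.Adj u v
    | Sum.inr i, Sum.inr j => i ≠ j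
    | Sum.inl u, Sum.inr i => u ∈ S ∧ (i : ℕ) = n - 1
    | Sum.inr i, Sum.inl u => u ∈ S ∧ (i : ℕ) = n - 1
  symm := by
    refine ⟨?_⟩
    rintro (u | i) (v | j) h
    · exact h.symm
    · exact h
    · exact h
    · exact h.symm
  loopless := by
    refine ⟨?_⟩
    rintro (u | i) h
    · exact G.irrefl h
    · exact h rfl

theorem stmt0 {α : Type*} [Fintype α] (G : SimpleGraph α) (S : Set α) (n : ℕ)
    (hn : 2 ≤ n) :
    vcNum (attachCompleteGraph G S n) = vcNum G + n - 1 := by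
  classical
  have hne : {m : ℕ | ∃ C : Finset α, IsVertexCover G C ∧ C.card = m}.Nonempty :=
    ⟨Finset.univ.card, Finset.univ, fun u v _ => Or.inl (Finset.mem_univ u), rfl⟩
  obtain ⟨C, hC, hCcard⟩ := Nat.sInf_mem hne
  -- the index n-1 as Fin n
  have hn1 : n - 1 < n := by omega
  have h0n : 0 < n := by omega
  set xn : Fin n := ⟨n - 1, hn1⟩
  -- upper bound
  have hub : vcNum (attachCompleteGraph G S n) ≤ vcNum G + (n - 1) := by
    apply Nat.sInf_le
    refine ⟨C.map ⟨Sum.inl, Sum.inl_injective⟩ ∪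
      ((Finset.univ.erase ⟨0, h0n⟩).map ⟨Sum.inr, Sum.inr_injective⟩), ?_, ?_⟩
    · rintro (u | i) (v | j) hadj
      · rcases hC hadj with h | h
        · exact Or.inl (Finset.mem_union_left _ (Finset.mem_map_of_mem _ h))
        · exact Or.inr (Finset.mem_union_left _ (Finset.mem_map_of_mem _ h))
      · -- u ∈ S, j = n-1
        right
        apply Finset.mem_union_right
        apply Finset.mem_map_of_mem
        refine Finset.mem_erase.2 ⟨?_, Finset.mem_univ _⟩
        intro h
        have hj : (j : ℕ) = n - 1 := hadj.2
        rw [h] at hj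
        simp at hj
        omega
      · left
        apply Finset.mem_union_right
        apply Finset.mem_map_of_mem
        refine Finset.mem_erase.2 ⟨?_, Finset.mem_univ _⟩
        intro h
        have hj : (i : ℕ) = n - 1 := hadj.2
        rw [h] at hj
        simp at hj
        omega
      · rcases Decidable.eq_or_ne i ⟨0, h0n⟩ with h | h
        · right
          apply Finset.mem_union_right
          apply Finset.mem_map_of_mem
          refine Finset.mem_erase.2 ⟨?_, Finset.mem_univ _⟩
          intro hj; rw [h, hj] at hadj; exact hadj rfl
        · left
          exact Finset.mem_union_right _ (Finset.mem_map_of_mem _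
            (Finset.mem_erase.2 ⟨h, Finset.mem_univ _⟩))
    · rw [Finset.card_union_of_disjoint, Finset.card_map, Finset.card_map,
        Finset.card_erase_of_mem (Finset.mem_univ _), Finset.card_univ,
        Fintype.card_fin, hCcard]
      · rfl
      · simp [Finset.disjoint_left]
  -- lower bound
  have hneΓ : {m : ℕ | ∃ C : Finset (α ⊕ Fin n),
      IsVertexCover (attachCompleteGraph G S n) C ∧ C.card = m}.Nonempty :=
    ⟨Finset.univ.card, Finset.univ, fun u v _ => Or.inl (Finset.mem_univ u), rfl⟩
  obtain ⟨D, hD, hDcard⟩ := Nat.sInf_mem hneΓ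
  have hlb : vcNum G + (n - 1) ≤ vcNum (attachCompleteGraph G S n) := by
    set A : Finset α := Finset.univ.filter (fun u => Sum.inl u ∈ D) with hA
    set B : Finset (Fin n) := Finset.univ.filter (fun i => Sum.inr i ∈ D) with hB
    have hAcover : IsVertexCover G A := by
      intro u v huv
      rcases hD (show (attachCompleteGraph G S n).Adj (Sum.inl u) (Sum.inl v) from huv)
        with h | h
      · exact Or.inl (Finset.mem_filter.2 ⟨Finset.mem_univ _, h⟩)
      · exact Or.inr (Finset.mem_filter.2 ⟨Finset.mem_univ _, h⟩)
    have hA_le : vcNum G ≤ A.card := Nat.sInf_le ⟨A, hAcover, rfl⟩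
    have hBcompl : (Finset.univ \ B).card ≤ 1 := by
      by_contra h
      push_neg at h
      obtain ⟨i, hi, j, hj, hij⟩ := Finset.one_lt_card.1 h
      have hi' : Sum.inr i ∉ D := by
        simp only [hB, Finset.mem_sdiff, Finset.mem_filter] at hi; tauto
      have hj' : Sum.inr j ∉ D := by
        simp only [hB, Finset.mem_sdiff, Finset.mem_filter] at hj; tauto
      rcases hD (show (attachCompleteGraph G S n).Adj (Sum.inr i) (Sum.inr j) from hij)
        with h | h
      · exact hi' h
      · exact hj' h
    have hBcard : n - 1 ≤ B.card := by
      have := Finset.card_sdiff_add_card_eq_card (Finset.subset_univ B)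
      have hu : (Finset.univ : Finset (Fin n)).card = n := by simp
      omega
    have hsub : A.map ⟨Sum.inl, Sum.inl_injective⟩ ∪
        B.map ⟨Sum.inr, Sum.inr_injective⟩ ⊆ D := by
      intro x hx
      rcases Finset.mem_union.1 hx with h | h <;>
        obtain ⟨y, hy, rfl⟩ := Finset.mem_map.1 h
      · exact (Finset.mem_filter.1 hy).2
      · exact (Finset.mem_filter.1 hy).2
    have hdisj : Disjoint (A.map ⟨Sum.inl, Sum.inl_injective⟩)
        (B.map ⟨Sum.inr, Sum.inr_injective⟩) := by
      simp [Finset.disjoint_left]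
    have hcard : A.card + B.card ≤ D.card := by
      have := Finset.card_le_card hsub
      rwa [Finset.card_union_of_disjoint hdisj,
        Finset.card_map, Finset.card_map] at this
    have hd : D.card = vcNum (attachCompleteGraph G S n) := hDcard
    omega
  omega
end

section
/- Let G be a graph, v ∈ V(G), and let W(K_n) be the whiskered complete graph on vertices x_1,...,x_n, y_1,...,y_n (n ≥ 1), with edges all pairs {x_i,x_j} for i ≠ j and the whiskers {x_i,y_i}. Let Γ be the graph obtained from the disjoint union of G and W(K_n) by adding all edges {v, x_i} for i ∈ [n]. Then β(Γ) = β(G) + n. -/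
/-- The graph `Γ` obtained from the disjoint union of `G` and the whiskered complete graph
`W(K_n)` (with clique vertices `Sum.inr (Sum.inl i)` playing the role of `x_i` and whisker
vertices `Sum.inr (Sum.inr i)` playing the role of `y_i`) by joining the fixed vertex `v` of
`G` to every clique vertex `x_i`. -/
def attachWhiskeredComplete {α : Type*} (G : SimpleGraph α) (v : α) (n : ℕ) :
    SimpleGraph (α ⊕ (Fin n ⊕ Fin n)) where
  Adj a b :=
    match a, b with
    | Sum.inl u, Sum.inl w => G.Adj u w
    | Sum.inr (Sum.inl i), Sum.inr (Sum.inl j) => i ≠ j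
    | Sum.inr (Sum.inl i), Sum.inr (Sum.inr j) => i = j
    | Sum.inr (Sum.inr i), Sum.inr (Sum.inl j) => i = j
    | Sum.inr (Sum.inr _), Sum.inr (Sum.inr _) => False
    | Sum.inl u, Sum.inr (Sum.inl _) => u = v
    | Sum.inr (Sum.inl _), Sum.inl u => u = v
    | Sum.inl _, Sum.inr (Sum.inr _) => False
    | Sum.inr (Sum.inr _), Sum.inl _ => False
  symm := by
    constructor
    rintro (u | (i | i)) (w | (j | j)) h
    · exact h.symm
    · exact h
    · exact h
    · exact h
    · exact h.symm
    · exact h.symm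
    · exact h
    · exact h.symm
    · exact h
  loopless := by
    constructor
    rintro (u | (i | i)) h
    · exact (G.ne_of_adj h) rfl
    · exact h rfl
    · exact h

theorem stmt1 {α : Type*} [Fintype α] (G : SimpleGraph α) (v : α) (n : ℕ)
    (hn : 1 ≤ n) :
    vcNum (attachWhiskeredComplete G v n) = vcNum G + n := by
  classical
  apply le_antisymm
  · -- upper bound
    have hne : {m : ℕ | ∃ C : Finset α, IsVertexCover G C ∧ C.card = m}.Nonempty :=
      ⟨Finset.univ.card, Finset.univ, fun u w _ => Or.inl (Finset.mem_univ u), rfl⟩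
    obtain ⟨C, hC, hcard⟩ := Nat.sInf_mem hne
    apply Nat.sInf_le
    refine ⟨C.image Sum.inl ∪ Finset.univ.image (fun i : Fin n => Sum.inr (Sum.inl i)), ?_, ?_⟩
    · rintro (u | (i | i)) (w | (j | j)) h
      · rcases hC h with h' | h'
        · exact Or.inl (Finset.mem_union_left _ (Finset.mem_image_of_mem _ h'))
        · exact Or.inr (Finset.mem_union_left _ (Finset.mem_image_of_mem _ h'))
      · exact Or.inr (Finset.mem_union_right _ (Finset.mem_image_of_mem _ (Finset.mem_univ j)))
      · exact h.elim
      · exact Or.inl (Finset.mem_union_right _ (Finset.mem_image_of_mem _ (Finset.mem_univ i)))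
      · exact Or.inl (Finset.mem_union_right _ (Finset.mem_image_of_mem _ (Finset.mem_univ i)))
      · exact Or.inl (Finset.mem_union_right _ (Finset.mem_image_of_mem _ (Finset.mem_univ i)))
      · exact h.elim
      · exact Or.inr (Finset.mem_union_right _ (Finset.mem_image_of_mem _ (Finset.mem_univ j)))
      · exact h.elim
    · have hdisj : Disjoint (C.image Sum.inl)
          (Finset.univ.image (fun i : Fin n => (Sum.inr (Sum.inl i) : α ⊕ (Fin n ⊕ Fin n)))) := by
        rw [Finset.disjoint_left]
        rintro a ha hb
        obtain ⟨u, _, rfl⟩ := Finset.mem_image.1 ha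
        obtain ⟨i, _, hi⟩ := Finset.mem_image.1 hb
        cases hi
      rw [Finset.card_union_of_disjoint hdisj,
        Finset.card_image_of_injective _ Sum.inl_injective,
        Finset.card_image_of_injective _ (fun i j h => by simpa using h),
        Finset.card_univ, Fintype.card_fin, hcard]
      rfl
  · refine le_csInf ⟨Finset.univ.card, Finset.univ, fun u w _ => Or.inl (Finset.mem_univ u), rfl⟩ ?_
    rintro m ⟨C, hC, rfl⟩
    set Cg : Finset α := C.preimage Sum.inl Sum.inl_injective.injOn with hCgdef
    have hCgcov : IsVertexCover G Cg := by
      intro u w h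
      have := hC (show (attachWhiskeredComplete G v n).Adj (Sum.inl u) (Sum.inl w) from h)
      simpa [hCgdef, Finset.mem_preimage] using this
    have h1 : vcNum G ≤ Cg.card := Nat.sInf_le ⟨Cg, hCgcov, rfl⟩
    set g : Fin n → α ⊕ (Fin n ⊕ Fin n) := fun i =>
      if Sum.inr (Sum.inl i) ∈ C then Sum.inr (Sum.inl i) else Sum.inr (Sum.inr i) with hg
    have hgC : ∀ i, g i ∈ C := by
      intro i
      by_cases hi : Sum.inr (Sum.inl i) ∈ C
      · simp [hg, hi]
      · have := hC (show (attachWhiskeredComplete G v n).Adj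
          (Sum.inr (Sum.inl i)) (Sum.inr (Sum.inr i)) from rfl)
        simp only [hg, hi, if_false]
        tauto
    have hginj : Function.Injective g := by
      intro i j hij
      simp only [hg] at hij
      split_ifs at hij <;> simp_all
    have hsub : Cg.image Sum.inl ∪ Finset.univ.image g ⊆ C := by
      intro a ha
      rcases Finset.mem_union.1 ha with ha | ha
      · obtain ⟨u, hu, rfl⟩ := Finset.mem_image.1 ha
        exact Finset.mem_preimage.1 hu
      · obtain ⟨i, _, rfl⟩ := Finset.mem_image.1 ha
        exact hgC i
    have hdisj : Disjoint (Cg.image Sum.inl) (Finset.univ.image g) := by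
      rw [Finset.disjoint_left]
      rintro a ha hb
      obtain ⟨u, _, rfl⟩ := Finset.mem_image.1 ha
      obtain ⟨i, _, hi⟩ := Finset.mem_image.1 hb
      simp only [hg] at hi
      split_ifs at hi <;> exact Sum.noConfusion hi
    have hcard : Cg.card + n ≤ C.card := by
      calc Cg.card + n = (Cg.image Sum.inl ∪ Finset.univ.image g).card := by
            rw [Finset.card_union_of_disjoint hdisj,
              Finset.card_image_of_injective _ Sum.inl_injective,
              Finset.card_image_of_injective _ hginj, Finset.card_univ, Fintype.card_fin]
        _ ≤ C.card := Finset.card_le_card hsub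
    omega
end

section
/- Let {I_i}_{i≥0} be a filtration of monomial ideals in a polynomial ring and k ≥ 1 an integer. If ∂*(I_k) ⊆ I_{k−1}, then ∂*(sqf(I_k)) ⊆ sqf(I_{k−1}), where sqf denotes the ideal generated by the squarefree monomials of an ideal and ∂*(J) is the ideal generated by all m/x with m a minimal monomial generator of J and x a variable dividing m. -/
open MvPolynomial

variable {n : ℕ} {K : Type*} [Field K]

/-- A (monic) monomial of the polynomial ring. -/
def IsMonomial (m : MvPolynomial (Fin n) K) : Prop :=
  ∃ s : Fin n →₀ ℕ, m = MvPolynomial.monomial s 1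

/-- A squarefree (monic) monomial: a product of distinct variables. -/
def IsSqfMonomial (m : MvPolynomial (Fin n) K) : Prop :=
  ∃ A : Finset (Fin n), m = ∏ i ∈ A, X i

/-- `J` is a monomial ideal: it is generated by monomials. -/
def IsMonomialIdeal (J : Ideal (MvPolynomial (Fin n) K)) : Prop :=
  ∃ T : Set (MvPolynomial (Fin n) K), (∀ m ∈ T, IsMonomial m) ∧ J = Ideal.span T

/-- `m` is a minimal (monic) monomial generator of the monomial ideal `J`:
a monomial of `J` not properly divisible by another monomial of `J`. -/
def IsMinGen (J : Ideal (MvPolynomial (Fin n) K)) (m : MvPolynomial (Fin n) K) : Prop :=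
  IsMonomial m ∧ m ∈ J ∧
    ∀ m', IsMonomial m' → m' ∈ J → m' ∣ m → m' = m

/-- The ideal `∂*(J)`, generated by all `m / x` where `m` is a minimal monomial
generator of `J` and `x` a variable dividing `m`. -/
noncomputable def delStar (J : Ideal (MvPolynomial (Fin n) K)) : Ideal (MvPolynomial (Fin n) K) :=
  Ideal.span {q | ∃ m : MvPolynomial (Fin n) K, ∃ x : Fin n,
    IsMinGen J m ∧ m = X x * q}

/-- The squarefree part `sqf(J)`: the ideal generated by all squarefree monomials in `J`. -/
noncomputable def sqfPart (J : Ideal (MvPolynomial (Fin n) K)) : Ideal (MvPolynomial (Fin n) K) :=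
  Ideal.span {m | IsSqfMonomial m ∧ m ∈ J}

lemma monomial_one_dvd {s t : Fin n →₀ ℕ} :
    (monomial s (1:K)) ∣ monomial t 1 ↔ s ≤ t := by
  rw [MvPolynomial.monomial_dvd_monomial]
  simp

lemma prod_X_eq_monomial' (A : Finset (Fin n)) :
    (∏ i ∈ A, (X i : MvPolynomial (Fin n) K)) = monomial (∑ i ∈ A, Finsupp.single i 1) 1 := by
  classical
  induction A using Finset.induction with
  | empty => simp
  | insert a s h ih =>
      rw [Finset.prod_insert h, Finset.sum_insert h, ih, X, monomial_mul, one_mul]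

lemma sum_single_apply (A : Finset (Fin n)) (j : Fin n) :
    (∑ i ∈ A, Finsupp.single i 1) j = if j ∈ A then 1 else 0 := by
  classical
  rw [Finset.sum_apply']
  simp only [Finsupp.single_apply]
  rw [Finset.sum_ite_eq' A j (fun _ => 1)]

lemma isSqf_iff {m : MvPolynomial (Fin n) K} :
    IsSqfMonomial m ↔ ∃ s : Fin n →₀ ℕ, (∀ i, s i ≤ 1) ∧ m = monomial s 1 := by
  classical
  constructor
  · rintro ⟨A, rfl⟩
    refine ⟨∑ i ∈ A, Finsupp.single i 1, ?_, prod_X_eq_monomial' A⟩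
    intro i
    rw [sum_single_apply]
    split_ifs <;> omega
  · rintro ⟨s, hs, rfl⟩
    refine ⟨s.support, ?_⟩
    rw [prod_X_eq_monomial']
    have hsum : (∑ i ∈ s.support, Finsupp.single i 1) = s := by
      ext j
      rw [sum_single_apply]
      split_ifs with hj
      · have := Finsupp.mem_support_iff.mp hj
        have := hs j
        omega
      · have := Finsupp.notMem_support_iff.mp hj
        omega
    rw [hsum]

lemma exists_dvd_of_mem_span {T : Set (MvPolynomial (Fin n) K)}
    (hT : ∀ p ∈ T, IsMonomial p) {s : Fin n →₀ ℕ}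
    (hs : monomial s (1:K) ∈ Ideal.span T) :
    ∃ t ∈ T, t ∣ monomial s 1 := by
  have hTeq : T = (fun e => monomial e (1:K)) '' {e | monomial e (1:K) ∈ T} := by
    ext t
    constructor
    · intro ht
      obtain ⟨e, he⟩ := hT t ht
      exact ⟨e, show (monomial e (1:K)) ∈ T from he ▸ ht, he.symm⟩
    · rintro ⟨e, he, rfl⟩
      exact he
  rw [hTeq, MvPolynomial.mem_ideal_span_monomial_image] at hs
  classical
  have hsup : s ∈ (monomial s (1:K)).support := by
    simp [MvPolynomial.support_monomial]
  obtain ⟨e, he, hle⟩ := hs s hsup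
  exact ⟨monomial e 1, he, monomial_one_dvd.mpr hle⟩

lemma exists_minGen_dvd {J : Ideal (MvPolynomial (Fin n) K)} {s : Fin n →₀ ℕ}
    (hs : monomial s (1:K) ∈ J) :
    ∃ e : Fin n →₀ ℕ, IsMinGen J (monomial e 1) ∧ e ≤ s := by
  classical
  set N : Set ℕ := {d | ∃ e : Fin n →₀ ℕ, (monomial e (1:K) ∈ J ∧ e ≤ s) ∧ ∑ i, e i = d}
  have hN : (∑ i, s i) ∈ N := ⟨s, ⟨hs, le_rfl⟩, rfl⟩
  obtain ⟨e, ⟨heJ, hes⟩, hed⟩ := Nat.sInf_mem ⟨_, hN⟩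
  refine ⟨e, ⟨⟨e, rfl⟩, heJ, ?_⟩, hes⟩
  rintro m' ⟨e', rfl⟩ hm'J hdvd
  have hle : e' ≤ e := monomial_one_dvd.mp hdvd
  have he'N : (∑ i, e' i) ∈ N := ⟨e', ⟨hm'J, le_trans hle hes⟩, rfl⟩
  have h1 : ∑ i, e i ≤ ∑ i, e' i := hed ▸ Nat.sInf_le he'N
  have h2 : ∀ i ∈ Finset.univ, e' i ≤ e i := fun i _ => Finsupp.le_def.mp hle i
  have h3 := (Finset.sum_eq_sum_iff_of_le h2).mp (le_antisymm (Finset.sum_le_sum h2) h1)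
  have : e' = e := Finsupp.ext fun i => h3 i (Finset.mem_univ i)
  rw [this]

theorem stmt6 (I : ℕ → Ideal (MvPolynomial (Fin n) K))
    -- `{I_i}` is a filtration of monomial ideals
    (h0 : I 0 = ⊤) (h1ne : I 1 ≠ ⊥) (h1pr : I 1 ≠ ⊤)
    (hdesc : ∀ i : ℕ, I (i + 1) ≤ I i)
    (hmon : ∀ i : ℕ, IsMonomialIdeal (I i))
    (k : ℕ) (hk : 1 ≤ k)
    (h : delStar (I k) ≤ I (k - 1)) :
    delStar (sqfPart (I k)) ≤ sqfPart (I (k - 1)) := by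
  classical
  have hkk : k - 1 + 1 = k := Nat.succ_pred_eq_of_pos hk
  rw [delStar, Ideal.span_le]
  rintro q ⟨m, x, ⟨hmMon, hmMem, hmin⟩, hxq⟩
  obtain ⟨s, hsm⟩ := hmMon
  -- the generators of sqfPart (I k) are monomials
  have hT : ∀ p ∈ {p : MvPolynomial (Fin n) K | IsSqfMonomial p ∧ p ∈ I k}, IsMonomial p := by
    rintro p ⟨hp, -⟩
    obtain ⟨e, -, rfl⟩ := isSqf_iff.mp hp
    exact ⟨e, rfl⟩
  rw [sqfPart] at hmMem
  obtain ⟨t, ht, htd⟩ := exists_dvd_of_mem_span hT (hsm ▸ hmMem)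
  have htm : t = m := hmin t (hT t ht) (Ideal.subset_span ht) (hsm ▸ htd)
  -- hence m itself is a squarefree monomial in I k
  have hmsqf : IsSqfMonomial m := (htm ▸ ht).1
  have hmIk : m ∈ I k := (htm ▸ ht).2
  obtain ⟨s', hs'le, hs'eq⟩ := isSqf_iff.mp hmsqf
  have hss' : s = s' := by
    have := hsm.symm.trans hs'eq
    rcases (MvPolynomial.monomial_eq_monomial_iff s s' (1:K) 1).mp this with ⟨h1, -⟩ | ⟨h1, -⟩
    · exact h1
    · exact absurd h1 one_ne_zero
  subst hss'
  have hssqf : ∀ i, s i ≤ 1 := hs'le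
  -- X x divides m, so q = monomial (s - single x 1) 1
  have hxdvd : Finsupp.single x 1 ≤ s := by
    have : (X x : MvPolynomial (Fin n) K) ∣ monomial s 1 := ⟨q, hsm ▸ hxq⟩
    rw [X, monomial_one_dvd] at this
    exact this
  set s₀ : Fin n →₀ ℕ := s - Finsupp.single x 1 with hs₀
  have hq : q = monomial s₀ 1 := by
    have hXne : (X x : MvPolynomial (Fin n) K) ≠ 0 := MvPolynomial.X_ne_zero x
    apply mul_left_cancel₀ hXne
    rw [← hxq, hsm, X, monomial_mul, one_mul, add_tsub_cancel_of_le hxdvd]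
  have hs₀le : s₀ ≤ s := tsub_le_self
  have hqsqf : IsSqfMonomial q := by
    rw [isSqf_iff]
    exact ⟨s₀, fun i => le_trans (Finsupp.le_def.mp hs₀le i) (hssqf i), hq⟩
  -- a minimal generator of I k dividing m
  obtain ⟨e, heMin, hes⟩ := exists_minGen_dvd (hsm ▸ hmIk)
  have hqmem : q ∈ I (k - 1) := by
    by_cases hex : e x = 0
    · -- m' divides q already; q ∈ I k ⊆ I (k-1)
      have hele : e ≤ s₀ := by
        rw [Finsupp.le_def]
        intro i
        rw [hs₀, Finsupp.tsub_apply]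
        by_cases hix : i = x
        · subst hix; omega
        · rw [Finsupp.single_apply, if_neg (Ne.symm hix)]
          have := Finsupp.le_def.mp hes i
          omega
      obtain ⟨c, hc⟩ := (monomial_one_dvd (K := K)).mpr hele
      have : q ∈ I k := by
        rw [hq, hc]
        exact Ideal.mul_mem_right _ _ heMin.2.1
      exact hkk ▸ hdesc (k - 1) (hkk.symm ▸ this)
    · -- x divides the minimal generator; use h
      have hxe : Finsupp.single x 1 ≤ e := by
        rw [Finsupp.le_def]
        intro i
        rw [Finsupp.single_apply]
        split_ifs with hix
        · subst hix; omega
        · omega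
      have hgen : monomial (e - Finsupp.single x 1) (1:K) ∈ delStar (I k) := by
        apply Ideal.subset_span
        refine ⟨monomial e 1, x, heMin, ?_⟩
        rw [X, monomial_mul, one_mul, add_tsub_cancel_of_le hxe]
      have hIk1 := h hgen
      have hdle : e - Finsupp.single x 1 ≤ s₀ := tsub_le_tsub_right hes _
      obtain ⟨c, hc⟩ := (monomial_one_dvd (K := K)).mpr hdle
      rw [hq, hc]
      exact Ideal.mul_mem_right _ _ hIk1
  show q ∈ sqfPart (I (k - 1))
  exact Ideal.subset_span ⟨hqsqf, hqmem⟩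
end
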